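/- The d-plane Radon transform on the torus is injective on continuous functions: if f : 𝕋^n → ℂ is continuous, 1 ≤ d < n, and ∫_{[0,1]^d} f(x + t_1 v_1 + ... + t_d v_d) dt = 0 for every x ∈ 𝕋^n and every linearly independent tuple v_1, ..., v_d ∈ ℤ^n \ {0}, then f = 0. -/

import Mathlib

open MeasureTheory Real Pointwise

noncomputable section Aux

/-- The character `x ↦ exp(2πi k·x)` on `ℝ^m`. -/
def ee {m : ℕ} (k : Fin m → ℤ) (x : Fin m → ℝ) : ℂ :=
  Complex.exp (2 * (π : ℂ) * Complex.I * ∑ j, (k j : ℂ) * (x j : ℂ))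

lemma ee_continuous {m : ℕ} (k : Fin m → ℤ) : Continuous (ee k) := by
  apply Complex.continuous_exp.comp
  exact continuous_const.mul (continuous_finset_sum _ fun j _ =>
    continuous_const.mul (Complex.continuous_ofReal.comp (continuous_apply j)))

lemma ee_add_int {m : ℕ} (k : Fin m → ℤ) (x : Fin m → ℝ) (w : Fin m → ℤ) :
    ee k (x + fun i => (w i : ℝ)) = ee k x := by
  have : (∑ j, (k j : ℂ) * (((x + fun i => (w i : ℝ)) j : ℝ) : ℂ))
      = (∑ j, (k j : ℂ) * (x j : ℂ)) + ((∑ j, k j * w j : ℤ) : ℂ) := by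
    push_cast
    simp [Pi.add_apply, mul_add, Finset.sum_add_distrib]
  rw [ee, this, mul_add, Complex.exp_add, ee]
  have h2 : (2 * (π : ℂ) * Complex.I * ((∑ j, k j * w j : ℤ) : ℂ))
      = ((∑ j, k j * w j : ℤ) : ℂ) * (2 * (π : ℝ) * Complex.I) := by push_cast; ring
  rw [h2, Complex.exp_int_mul_two_pi_mul_I, mul_one]

lemma ee_zero {m : ℕ} (x : Fin m → ℝ) : ee (0 : Fin m → ℤ) x = 1 := by
  simp [ee]

end Aux


lemma volume_icc (m : ℕ) : volume (Set.Icc (0 : Fin m → ℝ) 1) = 1 := by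
  rw [Real.volume_Icc_pi]
  simp

lemma icc_ae_pi (m : ℕ) :
    (Set.Icc (0 : Fin m → ℝ) 1 : Set (Fin m → ℝ))
      =ᵐ[volume] (Set.pi Set.univ fun _ : Fin m => Set.Ico (0:ℝ) 1) := by
  have hsub : (Set.pi Set.univ fun _ : Fin m => Set.Ico (0:ℝ) 1) ⊆ Set.Icc (0 : Fin m → ℝ) 1 := by
    rw [← Set.pi_univ_Icc]
    exact Set.pi_mono fun i _ => Set.Ico_subset_Icc_self
  have hv1 : volume (Set.Icc (0 : Fin m → ℝ) 1) = 1 := volume_icc m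
  have hv2 : volume (Set.pi Set.univ fun _ : Fin m => Set.Ico (0:ℝ) 1) = 1 := by
    rw [volume_pi_pi]; simp
  rw [MeasureTheory.ae_eq_set]
  constructor
  · rw [measure_diff hsub]
    · rw [hv1, hv2]; simp
    · exact (MeasurableSet.univ_pi fun _ => measurableSet_Ico).nullMeasurableSet
    · rw [hv2]; exact ENNReal.one_ne_top
  · rw [Set.diff_eq_empty.mpr hsub]; simp

lemma integral_Icc_add_eq {m : ℕ} (g : (Fin m → ℝ) → ℂ) (hg : Continuous g)
    (hper : ∀ (x : Fin m → ℝ) (w : Fin m → ℤ), g (x + fun i => (w i : ℝ)) = g x)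
    (c : Fin m → ℝ) :
    ∫ x in Set.Icc (0 : Fin m → ℝ) 1, g (x + c) = ∫ x in Set.Icc (0 : Fin m → ℝ) 1, g x := by
  classical
  set b := Pi.basisFun ℝ (Fin m) with hb
  set D := ZSpan.fundamentalDomain b with hD
  have hDfund : IsAddFundamentalDomain (Submodule.span ℤ (Set.range ⇑b)) D volume :=
    ZSpan.isAddFundamentalDomain b volume
  -- invariance of g under the lattice
  have hinv : ∀ (γ : Submodule.span ℤ (Set.range ⇑b)) (x : Fin m → ℝ), g (γ +ᵥ x) = g x := by
    intro γ x
    have hγ : ∀ i, ∃ z : ℤ, (z : ℝ) = (γ : Fin m → ℝ) i := by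
      intro i
      have := γ.2
      rw [Module.Basis.mem_span_iff_repr_mem] at this
      obtain ⟨z, hz⟩ := this i
      exact ⟨z, by simpa [hb] using hz⟩
    choose w hw using hγ
    have : (γ : Fin m → ℝ) + x = x + fun i => (w i : ℝ) := by
      funext i; simp [hw i, add_comm]
    show g ((γ : Fin m → ℝ) + x) = g x
    rw [this, hper]
  -- D a.e. equals the unit box
  have hDbox : (Set.Icc (0 : Fin m → ℝ) 1 : Set (Fin m → ℝ)) =ᵐ[volume] D := by
    rw [hD, ZSpan.fundamentalDomain_pi_basisFun]
    exact icc_ae_pi m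
  haveI : VAddCommClass (Fin m → ℝ) (↥(Submodule.span ℤ (Set.range ⇑b))) (Fin m → ℝ) :=
    ⟨fun a γ x => by show a + (↑γ + x) = ↑γ + (a + x); abel⟩
  haveI : MeasurableVAdd (↥(Submodule.span ℤ (Set.range ⇑b))) (Fin m → ℝ) := by
    constructor
    · intro γ
      exact (continuous_subtype_val.add continuous_const).measurable
  haveI : VAddInvariantMeasure (↥(Submodule.span ℤ (Set.range ⇑b))) (Fin m → ℝ) volume := by
    constructor
    intro γ s hs
    show volume ((fun x => (↑γ : Fin m → ℝ) + x) ⁻¹' s) = volume s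
    exact measure_preimage_add volume (↑γ) s
  have hDc : IsAddFundamentalDomain (Submodule.span ℤ (Set.range ⇑b)) (c +ᵥ D) volume :=
    hDfund.vadd_of_comm c
  calc ∫ x in Set.Icc (0 : Fin m → ℝ) 1, g (x + c)
      = ∫ x in D, g (x + c) := setIntegral_congr_set hDbox
    _ = ∫ y in c +ᵥ D, g y := by
        have hmp : MeasurePreserving (fun x : Fin m → ℝ => x + c) volume volume :=
          measurePreserving_add_right volume c
        have hemb : MeasurableEmbedding (fun x : Fin m → ℝ => x + c) :=
          (MeasurableEquiv.addRight c).measurableEmbedding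
        have hpre : (fun x : Fin m → ℝ => x + c) ⁻¹' (c +ᵥ D) = D := by
          ext y
          simp only [Set.mem_preimage, Set.mem_vadd_set_iff_neg_vadd_mem, vadd_eq_add]
          constructor
          · intro hy; convert hy using 1; abel
          · intro hy; convert hy using 1; abel
        have h2 := hmp.setIntegral_preimage_emb hemb g (c +ᵥ D)
        rwa [hpre] at h2
    _ = ∫ y in D, g y := hDc.setIntegral_eq hDfund hinv
    _ = ∫ x in Set.Icc (0 : Fin m → ℝ) 1, g x := (setIntegral_congr_set hDbox).symm

lemma integral_icc_swap {a b : ℕ} (F : (Fin a → ℝ) → (Fin b → ℝ) → ℂ)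
    (hF : Continuous (Function.uncurry F)) :
    ∫ x in Set.Icc (0 : Fin a → ℝ) 1, ∫ t in Set.Icc (0 : Fin b → ℝ) 1, F x t
      = ∫ t in Set.Icc (0 : Fin b → ℝ) 1, ∫ x in Set.Icc (0 : Fin a → ℝ) 1, F x t := by
  apply MeasureTheory.integral_integral_swap
  rw [Measure.prod_restrict]
  exact hF.continuousOn.integrableOn_compact (isCompact_Icc.prod isCompact_Icc)

lemma integral_icc_cons {m : ℕ} (F : (Fin (m+1) → ℝ) → ℂ) (hF : Continuous F) :
    ∫ x in Set.Icc (0 : Fin (m+1) → ℝ) 1, F x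
      = ∫ y in Set.Icc (0 : Fin m → ℝ) 1, ∫ s in Set.Icc (0:ℝ) 1, F (Fin.cons s y) := by
  have hmp := measurePreserving_piFinSuccAbove (fun _ : Fin (m+1) => (volume : Measure ℝ)) 0
  set e := MeasurableEquiv.piFinSuccAbove (fun _ : Fin (m+1) => ℝ) 0 with he
  have hemb : MeasurableEmbedding e := e.measurableEmbedding
  have hsymm : ∀ p : ℝ × (Fin m → ℝ), e.symm p = Fin.cons p.1 p.2 := by
    intro p
    rw [MeasurableEquiv.piFinSuccAbove_symm_apply]
    exact Fin.insertNth_zero' p.1 p.2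
  have hpre : e ⁻¹' (Set.Icc (0:ℝ) 1 ×ˢ Set.Icc (0 : Fin m → ℝ) 1)
      = Set.Icc (0 : Fin (m+1) → ℝ) 1 := by
    ext x
    simp only [Set.mem_preimage, Set.mem_prod, Set.mem_Icc, MeasurableEquiv.piFinSuccAbove_apply,
      Pi.le_def]
    constructor
    · rintro ⟨⟨h1, h2⟩, h3, h4⟩
      constructor
      · intro i
        rcases Fin.eq_zero_or_eq_succ i with rfl | ⟨j, rfl⟩
        · exact h1
        · exact h3 j
      · intro i
        rcases Fin.eq_zero_or_eq_succ i with rfl | ⟨j, rfl⟩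
        · exact h2
        · exact h4 j
    · rintro ⟨h1, h2⟩
      exact ⟨⟨h1 0, h2 0⟩, fun j => by exact h1 j.succ, fun j => by exact h2 j.succ⟩
  have hcont : Continuous (fun p : ℝ × (Fin m → ℝ) => F (Fin.cons p.1 p.2)) := by
    apply hF.comp
    apply continuous_pi
    intro i
    refine Fin.cases ?_ ?_ i
    · simpa using continuous_fst
    · intro j
      exact (continuous_apply j).comp continuous_snd
  calc ∫ x in Set.Icc (0 : Fin (m+1) → ℝ) 1, F x
      = ∫ p in (Set.Icc (0:ℝ) 1 ×ˢ Set.Icc (0 : Fin m → ℝ) 1), F (e.symm p) := by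
        rw [← hpre]
        have h2 := hmp.setIntegral_preimage_emb hemb (fun p => F (e.symm p))
          (Set.Icc (0:ℝ) 1 ×ˢ Set.Icc (0 : Fin m → ℝ) 1)
        simp only [MeasurableEquiv.symm_apply_apply] at h2
        exact h2
    _ = ∫ p in (Set.Icc (0:ℝ) 1 ×ˢ Set.Icc (0 : Fin m → ℝ) 1), F (Fin.cons p.1 p.2) := by
        apply setIntegral_congr_fun (measurableSet_Icc.prod measurableSet_Icc)
        intro p _
        simp only [hsymm]
    _ = ∫ s in Set.Icc (0:ℝ) 1, ∫ y in Set.Icc (0 : Fin m → ℝ) 1, F (Fin.cons s y) := by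
        apply MeasureTheory.setIntegral_prod
        exact hcont.continuousOn.integrableOn_compact (isCompact_Icc.prod isCompact_Icc)
    _ = ∫ y in Set.Icc (0 : Fin m → ℝ) 1, ∫ s in Set.Icc (0:ℝ) 1, F (Fin.cons s y) := by
        apply MeasureTheory.integral_integral_swap
        rw [Measure.prod_restrict]
        exact hcont.continuousOn.integrableOn_compact (isCompact_Icc.prod isCompact_Icc)

lemma oneD (g : ℝ → ℂ) (hg : Continuous g) (hper : Function.Periodic g 1)
    (hc : ∀ l : ℤ, ∫ s in Set.Icc (0:ℝ) 1,
      g s * Complex.exp (2 * (π:ℂ) * Complex.I * ((l : ℂ) * (s : ℂ))) = 0) :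
    g = 0 := by
  haveI : Fact (0 < (1:ℝ)) := ⟨one_pos⟩
  set G : AddCircle (1:ℝ) → ℂ := AddCircle.liftIco 1 0 g with hG
  have hGcont : Continuous G := by
    apply AddCircle.liftIco_continuous
    · rw [zero_add]; exact (hper 0).symm.trans (by rw [zero_add])
    · exact hg.continuousOn
  -- all Fourier coefficients of G vanish
  have hcoeff : ∀ l : ℤ, fourierCoeff G l = 0 := by
    intro l
    rw [hG, fourierCoeff_liftIco_eq, fourierCoeffOn_eq_integral]
    have : ∫ x in (0:ℝ)..0+1, fourier (-l) (x : AddCircle ((0:ℝ)+1-0)) • g x = 0 := by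
      rw [intervalIntegral.integral_of_le (by norm_num : (0:ℝ) ≤ 0+1)]
      rw [← integral_Icc_eq_integral_Ioc]
      rw [← hc (-l)]
      have hIcc : Set.Icc (0:ℝ) (0+1) = Set.Icc (0:ℝ) 1 := by norm_num
      rw [hIcc]
      apply setIntegral_congr_fun measurableSet_Icc
      intro x _
      simp only [fourier_coe_apply, smul_eq_mul]
      push_cast
      norm_num
      ring_nf
    rw [this, smul_zero]
  -- conclude G = 0 via the Hilbert basis
  set Gc : C(AddCircle (1:ℝ), ℂ) := ⟨G, hGcont⟩ with hGc
  have hL2 : ContinuousMap.toLp (E := ℂ) 2 (@AddCircle.haarAddCircle 1 _) ℂ Gc = 0 := by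
    have hs := (@fourierBasis 1 _).hasSum_repr (ContinuousMap.toLp (E := ℂ) 2 (@AddCircle.haarAddCircle 1 _) ℂ Gc)
    have hz : ∀ i : ℤ, (@fourierBasis 1 _).repr
        (ContinuousMap.toLp (E := ℂ) 2 (@AddCircle.haarAddCircle 1 _) ℂ Gc) i = 0 := by
      intro i
      rw [fourierBasis_repr, fourierCoeff_toLp]
      exact hcoeff i
    have hs0 : HasSum (fun _ : ℤ => (0 : Lp ℂ 2 (@AddCircle.haarAddCircle 1 _)))
        (ContinuousMap.toLp (E := ℂ) 2 (@AddCircle.haarAddCircle 1 _) ℂ Gc) := by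
      convert hs using 2 with i
      rw [hz i, zero_smul]
    exact (hasSum_zero.unique hs0).symm
  have hGc0 : Gc = 0 := by
    apply ContinuousMap.toLp_injective (E := ℂ) (@AddCircle.haarAddCircle 1 _) (𝕜 := ℂ) (p := 2)
    rw [hL2, map_zero]
  have hG0 : ∀ z : AddCircle (1:ℝ), G z = 0 := fun z => DFunLike.congr_fun hGc0 z
  funext x
  have hfr : g (Int.fract x) = g x := by
    rw [Int.fract]
    simpa using hper.sub_int_mul_eq (x := x) ⌊x⌋
  rw [← hfr]
  have hmem : Int.fract x ∈ Set.Ico (0:ℝ) (0+1) := by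
    rw [zero_add]
    exact ⟨Int.fract_nonneg x, Int.fract_lt_one x⟩
  have := AddCircle.liftIco_coe_apply (f := g) hmem
  rw [← this]
  show G _ = _
  rw [hG0]
  rfl


lemma ee_cons {m : ℕ} (l : ℤ) (k : Fin m → ℤ) (s : ℝ) (y : Fin m → ℝ) :
    ee (Fin.cons l k) (Fin.cons s y : Fin (m+1) → ℝ)
      = Complex.exp (2 * (π:ℂ) * Complex.I * ((l:ℂ) * (s:ℂ))) * ee k y := by
  rw [ee, ee, ← Complex.exp_add]
  congr 1
  have : ∑ j : Fin (m+1), (((Fin.cons l k : Fin (m+1) → ℤ) j : ℤ) : ℂ) * (((Fin.cons s y : Fin (m+1) → ℝ) j : ℝ) : ℂ)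
      = (l:ℂ)*(s:ℂ) + ∑ j, (k j:ℂ)*(y j:ℂ) := by
    rw [Fin.sum_univ_succ]
    simp [Fin.cons_zero, Fin.cons_succ]
  rw [this]
  ring

lemma fourier_unique : ∀ (m : ℕ) (g : (Fin m → ℝ) → ℂ), Continuous g →
    (∀ (x : Fin m → ℝ) (w : Fin m → ℤ), g (x + fun i => (w i : ℝ)) = g x) →
    (∀ k : Fin m → ℤ, ∫ x in Set.Icc (0 : Fin m → ℝ) 1, g x * ee k x = 0) →
    g = 0 := by
  intro m
  induction m with
  | zero =>
    intro g hg hper hc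
    funext x
    have h0 := hc 0
    have heq : ∀ y ∈ Set.Icc (0 : Fin 0 → ℝ) 1, g y * ee (0 : Fin 0 → ℤ) y = g default :=
      fun y _ => by rw [ee_zero, mul_one, Subsingleton.elim y default]
    rw [setIntegral_congr_fun measurableSet_Icc heq, setIntegral_const, measureReal_def, volume_icc] at h0
    rw [Subsingleton.elim x default]
    simpa using h0
  | succ m ih =>
    intro g hg hper hc
    set h : ℤ → (Fin m → ℝ) → ℂ := fun l y => ∫ s in Set.Icc (0:ℝ) 1,
      g (Fin.cons s y) * Complex.exp (2 * (π:ℂ) * Complex.I * ((l:ℂ) * (s:ℂ))) with hh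
    have hconsCont : Continuous
        (fun p : (Fin m → ℝ) × ℝ => (Fin.cons p.2 p.1 : Fin (m+1) → ℝ)) := by
      apply continuous_pi; intro i
      refine Fin.cases ?_ ?_ i
      · simpa using continuous_snd
      · intro j; exact (continuous_apply j).comp continuous_fst
    have hcont : ∀ l, Continuous (h l) := by
      intro l
      apply continuous_parametric_integral_of_continuous ?_ isCompact_Icc
      apply Continuous.mul
      · exact hg.comp hconsCont
      · apply Complex.continuous_exp.comp
        exact continuous_const.mul (continuous_const.mul
          (Complex.continuous_ofReal.comp continuous_snd))
    have hhper : ∀ l (y : Fin m → ℝ) (w : Fin m → ℤ),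
        h l (y + fun i => (w i : ℝ)) = h l y := by
      intro l y w
      apply setIntegral_congr_fun measurableSet_Icc
      intro s _
      dsimp only
      have hx : (Fin.cons s (y + fun i => (w i:ℝ)) : Fin (m+1) → ℝ)
          = (Fin.cons s y : Fin (m+1) → ℝ) + fun i => ((Fin.cons 0 w : Fin (m+1) → ℤ) i : ℝ) := by
        funext i
        refine Fin.cases ?_ ?_ i <;> simp [Fin.cons_zero, Fin.cons_succ]
      rw [hx, hper]
    have hhc : ∀ l (k : Fin m → ℤ),
        ∫ y in Set.Icc (0 : Fin m → ℝ) 1, h l y * ee k y = 0 := by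
      intro l k
      set G : (Fin (m+1) → ℝ) → ℂ := fun x => g x * ee (Fin.cons l k) x with hG
      have hGcont : Continuous G := hg.mul (ee_continuous _)
      have step1 : ∀ y : Fin m → ℝ, h l y * ee k y
          = ∫ s in Set.Icc (0:ℝ) 1, G (Fin.cons s y) := by
        intro y
        rw [hh]
        rw [← MeasureTheory.integral_mul_const]
        apply setIntegral_congr_fun measurableSet_Icc
        intro s _
        rw [hG]
        simp only
        rw [ee_cons]
        ring
      calc ∫ y in Set.Icc (0 : Fin m → ℝ) 1, h l y * ee k y
          = ∫ y in Set.Icc (0 : Fin m → ℝ) 1, ∫ s in Set.Icc (0:ℝ) 1, G (Fin.cons s y) := by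
            exact setIntegral_congr_fun measurableSet_Icc fun y _ => step1 y
        _ = ∫ x in Set.Icc (0 : Fin (m+1) → ℝ) 1, G x := (integral_icc_cons G hGcont).symm
        _ = 0 := hc (Fin.cons l k)
    have hl0 : ∀ l, h l = 0 := fun l => ih (h l) (hcont l) (hhper l) (hhc l)
    funext x
    set y := Fin.tail x with hy
    set φ : ℝ → ℂ := fun s => g (Fin.cons s y) with hφ
    have hφcont : Continuous φ := by
      apply hg.comp
      apply continuous_pi; intro i
      refine Fin.cases ?_ ?_ i
      · exact continuous_id
      · intro j; simpa using continuous_const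
    have hφper : Function.Periodic φ 1 := by
      intro s
      have hx : (Fin.cons (s+1) y : Fin (m+1) → ℝ)
          = (Fin.cons s y : Fin (m+1) → ℝ)
            + fun i => (((Fin.cons 1 0 : Fin (m+1) → ℤ)) i : ℝ) := by
        funext i
        refine Fin.cases ?_ ?_ i <;> simp [Fin.cons_zero, Fin.cons_succ]
      show g _ = g _
      rw [hx, hper]
    have hφc : ∀ l : ℤ, ∫ s in Set.Icc (0:ℝ) 1,
        φ s * Complex.exp (2 * (π:ℂ) * Complex.I * ((l : ℂ) * (s : ℂ))) = 0 := by
      intro l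
      have := congrFun (hl0 l) y
      simpa [hh] using this
    have hφ0 : φ = 0 := oneD φ hφcont hφper hφc
    have : g (Fin.cons (x 0) (Fin.tail x)) = 0 := congrFun hφ0 (x 0)
    rwa [Fin.cons_self_tail] at this



lemma exists_orth (n d : ℕ) (hd1 : 1 ≤ d) (hdn : d < n) (k : Fin n → ℤ) :
    ∃ W : Fin d → (Fin n → ℤ), (∀ i, W i ≠ 0) ∧
      LinearIndependent ℝ (fun i : Fin d => (fun j : Fin n => (W i j : ℝ))) ∧
      (∀ i, ∑ j, k j * W i j = 0) := by
  by_cases hk : k = 0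
  · -- standard basis vectors
    refine ⟨fun i => fun j => if j = Fin.castLE hdn.le i then 1 else 0, ?_, ?_, ?_⟩
    · intro i hcon
      have := congrFun hcon (Fin.castLE hdn.le i)
      simp at this
    · rw [Fintype.linearIndependent_iff]
      intro gc hgc i0
      have := congrFun hgc (Fin.castLE hdn.le i0)
      simp only [Finset.sum_apply, Pi.smul_apply, smul_eq_mul, Pi.zero_apply] at this
      rw [Finset.sum_eq_single i0] at this
      · simpa using this
      · intro i _ hne
        have : ¬ (Fin.castLE hdn.le i0 = Fin.castLE hdn.le i) := by
          simp [Fin.castLE_inj]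
          exact fun hcon => hne hcon.symm
        simp [this]
      · intro hcon
        exact absurd (Finset.mem_univ i0) hcon
    · intro i
      simp [hk]
  · obtain ⟨j0, hj0⟩ := Function.ne_iff.mp hk
    have hj0' : k j0 ≠ 0 := hj0
    have hn1 : n - 1 + 1 = n := by omega
    let e : Fin (n-1+1) ≃ Fin n := finCongr hn1
    let σ : Fin d → Fin n := fun i => e ((e.symm j0).succAbove (Fin.castLE (by omega : d ≤ n-1) i))
    have hσinj : Function.Injective σ := by
      intro a b hab
      have h1 := e.injective hab
      have h2 := Fin.succAbove_right_injective (p := e.symm j0) h1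
      exact Fin.castLE_injective _ h2
    have hσne : ∀ i, σ i ≠ j0 := by
      intro i hcon
      have : (e.symm j0).succAbove (Fin.castLE (by omega : d ≤ n-1) i) = e.symm j0 := by
        apply e.injective
        simpa using hcon
      exact Fin.succAbove_ne _ _ this
    refine ⟨fun i => fun j => (if j = σ i then k j0 else 0) - (if j = j0 then k (σ i) else 0),
      ?_, ?_, ?_⟩
    · intro i hcon
      have := congrFun hcon (σ i)
      simp [hσne i, hj0'] at this
    · rw [Fintype.linearIndependent_iff]
      intro gc hgc i0
      have := congrFun hgc (σ i0)
      simp only [Finset.sum_apply, Pi.smul_apply, smul_eq_mul, Pi.zero_apply] at this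
      rw [Finset.sum_eq_single i0] at this
      · rw [if_pos rfl, if_neg (hσne i0)] at this
        push_cast at this
        rw [sub_zero] at this
        rcases mul_eq_zero.mp this with h | h
        · exact h
        · exfalso
          apply hj0'
          exact_mod_cast by simpa using h
      · intro i _ hne
        have hne' : ¬ (σ i0 = σ i) := fun hcon => hne (hσinj hcon).symm
        simp [hne', hσne i0]
      · intro hcon
        exact absurd (Finset.mem_univ i0) hcon
    · intro i
      simp only [mul_sub, Finset.sum_sub_distrib, mul_ite, mul_zero]
      rw [Finset.sum_ite_eq' Finset.univ (σ i) (fun j => k j * k j0),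
        Finset.sum_ite_eq' Finset.univ j0 (fun j => k j * k (σ i))]
      simp [mul_comm]

theorem dplane_injective (n d : ℕ) (hn : 2 ≤ n) (hd1 : 1 ≤ d) (hdn : d < n)
    (f : (Fin n → ℝ) → ℂ)
    (hf : Continuous f)
    (hper : ∀ (x : Fin n → ℝ) (m : Fin n → ℤ), f (x + fun i => (m i : ℝ)) = f x)
    (h : ∀ (x : Fin n → ℝ) (v : Fin d → (Fin n → ℤ)), (∀ i, v i ≠ 0) →
      LinearIndependent ℝ (fun i : Fin d => (fun j : Fin n => (v i j : ℝ))) →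
      (∫ t in Set.Icc (0 : Fin d → ℝ) 1, f (x + fun j => ∑ i, t i * (v i j : ℝ))) = 0) :
    f = 0 := by
  apply fourier_unique n f hf hper
  intro k
  obtain ⟨W, hWnz, hWind, hWorth⟩ := exists_orth n d hd1 hdn k
  set V : (Fin d → ℝ) → (Fin n → ℝ) := fun t => fun j => ∑ i, t i * (W i j : ℝ) with hV
  have hVcont : Continuous V := by
    apply continuous_pi
    intro j
    exact continuous_finset_sum _ fun i _ => (continuous_apply i).mul continuous_const
  -- the character is invariant in directions of W
  have hEV : ∀ (x : Fin n → ℝ) (t : Fin d → ℝ), ee k (x + V t) = ee k x := by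
    intro x t
    have hreal : ∑ j, (k j : ℝ) * (V t j) = 0 := by
      have : ∑ j, (k j : ℝ) * (V t j) = ∑ i, t i * ((∑ j, k j * W i j : ℤ) : ℝ) := by
        rw [hV]
        push_cast
        simp only [Finset.mul_sum]
        rw [Finset.sum_comm]
        apply Finset.sum_congr rfl
        intro i _
        apply Finset.sum_congr rfl
        intro j _
        ring
      rw [this]
      simp [hWorth]
    have hcplx : ∑ j, (k j : ℂ) * ((V t j : ℝ) : ℂ) = 0 := by
      have : ∑ j, (k j : ℂ) * ((V t j : ℝ) : ℂ) = ((∑ j, (k j : ℝ) * (V t j) : ℝ) : ℂ) := by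
        push_cast; rfl
      rw [this, hreal, Complex.ofReal_zero]
    have hsum : ∑ j, (k j : ℂ) * (((x + V t) j : ℝ) : ℂ)
        = ∑ j, (k j : ℂ) * ((x j : ℝ) : ℂ) := by
      calc ∑ j, (k j : ℂ) * (((x + V t) j : ℝ) : ℂ)
          = ∑ j, ((k j : ℂ) * ((x j : ℝ) : ℂ) + (k j : ℂ) * ((V t j : ℝ) : ℂ)) := by
            apply Finset.sum_congr rfl
            intro j _
            simp only [Pi.add_apply, Complex.ofReal_add]
            ring
        _ = ∑ j, (k j : ℂ) * ((x j : ℝ) : ℂ) := by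
            rw [Finset.sum_add_distrib, hcplx, add_zero]
    rw [ee, ee, hsum]
  -- inner integral for fixed t
  have hinner : ∀ t : Fin d → ℝ,
      ∫ x in Set.Icc (0 : Fin n → ℝ) 1, f (x + V t) * ee k x
        = ∫ x in Set.Icc (0 : Fin n → ℝ) 1, f x * ee k x := by
    intro t
    have hgc : Continuous (fun x => f x * ee k x) := hf.mul (ee_continuous k)
    have hgper : ∀ (x : Fin n → ℝ) (w : Fin n → ℤ),
        (fun x => f x * ee k x) (x + fun i => (w i : ℝ)) = (fun x => f x * ee k x) x := by
      intro x w
      simp only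
      rw [hper, ee_add_int]
    calc ∫ x in Set.Icc (0 : Fin n → ℝ) 1, f (x + V t) * ee k x
        = ∫ x in Set.Icc (0 : Fin n → ℝ) 1, (fun y => f y * ee k y) (x + V t) := by
          apply setIntegral_congr_fun measurableSet_Icc
          intro x _
          simp only
          rw [hEV x t]
      _ = ∫ x in Set.Icc (0 : Fin n → ℝ) 1, f x * ee k x :=
          integral_Icc_add_eq (fun y => f y * ee k y) hgc hgper (V t)
  have hzero : ∀ x : Fin n → ℝ, ∫ t in Set.Icc (0 : Fin d → ℝ) 1, f (x + V t) = 0 := by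
    intro x
    exact h x W hWnz hWind
  have hFcont : Continuous (Function.uncurry
      (fun (x : Fin n → ℝ) (t : Fin d → ℝ) => f (x + V t) * ee k x)) := by
    apply Continuous.mul
    · exact hf.comp (continuous_fst.add (hVcont.comp continuous_snd))
    · exact (ee_continuous k).comp continuous_fst
  have hchain : (0 : ℂ) = ∫ x in Set.Icc (0 : Fin n → ℝ) 1, f x * ee k x := by
    calc (0 : ℂ)
        = ∫ x in Set.Icc (0 : Fin n → ℝ) 1,
            (∫ t in Set.Icc (0 : Fin d → ℝ) 1, f (x + V t)) * ee k x := by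
          rw [setIntegral_congr_fun measurableSet_Icc
            (fun x _ => by rw [hzero x, zero_mul] :
              ∀ x ∈ Set.Icc (0 : Fin n → ℝ) 1,
                (∫ t in Set.Icc (0 : Fin d → ℝ) 1, f (x + V t)) * ee k x = 0)]
          simp
      _ = ∫ x in Set.Icc (0 : Fin n → ℝ) 1,
            ∫ t in Set.Icc (0 : Fin d → ℝ) 1, f (x + V t) * ee k x := by
          apply setIntegral_congr_fun measurableSet_Icc
          intro x _
          exact (MeasureTheory.integral_mul_const (ee k x) _).symm
      _ = ∫ t in Set.Icc (0 : Fin d → ℝ) 1,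
            ∫ x in Set.Icc (0 : Fin n → ℝ) 1, f (x + V t) * ee k x :=
          integral_icc_swap _ hFcont
      _ = ∫ t in Set.Icc (0 : Fin d → ℝ) 1,
            (∫ x in Set.Icc (0 : Fin n → ℝ) 1, f x * ee k x) := by
          apply setIntegral_congr_fun measurableSet_Icc
          intro t _
          exact hinner t
      _ = ∫ x in Set.Icc (0 : Fin n → ℝ) 1, f x * ee k x := by
          rw [setIntegral_const, measureReal_def, volume_icc]
          simp
  exact hchain.symm
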